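/- Let R ⊆ [n]² with |R| ≤ Cn, and suppose a uniformly random π ∈ S_n avoids R with probability at least γ > 0. If n ≥ 32C/γ + 3, then for all i_1, j_1, i_2, j_2 ∈ [n] with i_1 ≠ i_2 and j_1 ≠ j_2, the conditional probability that π avoids R \ {(i_1,j_1),(i_2,j_2)} given that π(i_1) = j_1 and π(i_2) = j_2 is at least γ/4. -/

import Mathlib

open Finset Equiv

private def fm {m : ℕ} (i1 i2 j1 j2 : Fin m) (σ : Equiv.Perm (Fin m)) : Equiv.Perm (Fin m) :=
  σ * Equiv.swap i1 (σ⁻¹ j1) * Equiv.swap i2 ((σ * Equiv.swap i1 (σ⁻¹ j1))⁻¹ j2)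

private lemma fm_i2 {m : ℕ} (i1 i2 j1 j2 : Fin m) (σ : Equiv.Perm (Fin m)) :
    fm i1 i2 j1 j2 σ i2 = j2 := by
  simp [fm, Equiv.Perm.mul_apply]

private lemma fm_i1 {m : ℕ} (i1 i2 j1 j2 : Fin m) (hi : i1 ≠ i2) (hj : j1 ≠ j2)
    (σ : Equiv.Perm (Fin m)) : fm i1 i2 j1 j2 σ i1 = j1 := by
  set a := σ⁻¹ j1 with ha
  set σ1 := σ * Equiv.swap i1 a with hσ1
  set b := σ1⁻¹ j2 with hb
  have h1 : σ1 i1 = j1 := by simp [hσ1, Equiv.Perm.mul_apply, ha]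
  have hbi1 : b ≠ i1 := by
    intro h
    have : σ1 b = j2 := by simp [hb]
    rw [h, h1] at this
    exact hj this
  show σ1 (Equiv.swap i2 b i1) = j1
  rw [Equiv.swap_apply_of_ne_of_ne hi (Ne.symm hbi1), h1]

private lemma fm_undo {m : ℕ} (i1 i2 j1 j2 : Fin m) (σ : Equiv.Perm (Fin m)) :
    σ = fm i1 i2 j1 j2 σ * Equiv.swap i2 ((σ * Equiv.swap i1 (σ⁻¹ j1))⁻¹ j2)
        * Equiv.swap i1 (σ⁻¹ j1) := by
  simp [fm, mul_assoc]

private lemma tau_spec {α : Type*} [DecidableEq α] {u v c d : α} (huv : u ≠ v) (hcd : c ≠ d) :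
    (Equiv.swap (Equiv.swap u c v) d) ((Equiv.swap u c) u) = c ∧
    (Equiv.swap (Equiv.swap u c v) d) ((Equiv.swap u c) v) = d := by
  constructor
  · rw [Equiv.swap_apply_left]
    by_cases hvc : v = c
    · subst hvc
      rw [Equiv.swap_apply_right]
      exact Equiv.swap_apply_of_ne_of_ne (Ne.symm huv) hcd
    · rw [Equiv.swap_apply_of_ne_of_ne (Ne.symm huv) (fun h => hvc h)]
      exact Equiv.swap_apply_of_ne_of_ne (fun h => hvc h.symm) hcd
  · exact Equiv.swap_apply_left _ _

private lemma perm_pair_count (k : ℕ) (R : Finset (Fin (k+2) × Fin (k+2)))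
    (x z u v : Fin (k+2)) (h : x = z → u = v → (x, u) ∈ R) :
    (Finset.univ.filter fun σ : Equiv.Perm (Fin (k+2)) =>
      (∀ t, (t, σ t) ∉ R) ∧ σ x = u ∧ σ z = v).card ≤ k.factorial := by
  set S := Finset.univ.filter fun σ : Equiv.Perm (Fin (k+2)) =>
      (∀ t, (t, σ t) ∉ R) ∧ σ x = u ∧ σ z = v with hS
  by_cases hxz : x = z
  · subst hxz
    by_cases huv : u = v
    · subst huv
      have : S = ∅ := by
        ext σ
        simp only [hS, Finset.mem_filter, Finset.mem_univ, true_and, Finset.notMem_empty,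
          iff_false]
        rintro ⟨havd, h1, -⟩
        exact havd x (by rw [h1]; exact h rfl rfl)
      simp [this]
    · have : S = ∅ := by
        ext σ
        simp only [hS, Finset.mem_filter, Finset.mem_univ, true_and, Finset.notMem_empty,
          iff_false]
        rintro ⟨-, h1, h2⟩
        exact huv (h1 ▸ h2 ▸ rfl)
      simp [this]
  · by_cases huv : u = v
    · subst huv
      have : S = ∅ := by
        ext σ
        simp only [hS, Finset.mem_filter, Finset.mem_univ, true_and, Finset.notMem_empty,
          iff_false]
        rintro ⟨-, h1, h2⟩
        exact hxz (σ.injective (h1.trans h2.symm))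
      simp [this]
    · -- injection argument
      set P := (Finset.univ : Finset (Fin (k+2))).offDiag with hP
      have hinj : ∀ q ∈ S ×ˢ P, ∀ q' ∈ S ×ˢ P,
          (Equiv.swap (Equiv.swap u q.2.1 v) q.2.2 * Equiv.swap u q.2.1) * q.1 =
          (Equiv.swap (Equiv.swap u q'.2.1 v) q'.2.2 * Equiv.swap u q'.2.1) * q'.1 → q = q' := by
        rintro ⟨σ, c, d⟩ hq ⟨σ', c', d'⟩ hq' heq
        simp only [Finset.mem_product, hS, Finset.mem_filter, Finset.mem_univ, true_and,
          Finset.mem_offDiag, hP] at hq hq'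
        obtain ⟨⟨-, hx1, hz1⟩, hcd⟩ := hq
        obtain ⟨⟨-, hx2, hz2⟩, hcd'⟩ := hq'
        have e1 : c = c' := by
          have h1 := congrArg (fun ρ : Equiv.Perm (Fin (k+2)) => ρ x) heq
          simp only [Equiv.Perm.mul_apply, hx1, hx2] at h1
          rw [(tau_spec huv hcd).1, (tau_spec huv hcd').1] at h1
          exact h1
        have e2 : d = d' := by
          have h1 := congrArg (fun ρ : Equiv.Perm (Fin (k+2)) => ρ z) heq
          simp only [Equiv.Perm.mul_apply, hz1, hz2] at h1
          rw [(tau_spec huv hcd).2, (tau_spec huv hcd').2] at h1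
          exact h1
        subst e1; subst e2
        have : σ = σ' := mul_left_cancel heq
        simp [this]
      have hcard : (S ×ˢ P).card ≤ (Finset.univ : Finset (Equiv.Perm (Fin (k+2)))).card := by
        apply Finset.card_le_card_of_injOn
          (f := fun q => (Equiv.swap (Equiv.swap u q.2.1 v) q.2.2 * Equiv.swap u q.2.1) * q.1)
        · intro q _; exact Finset.mem_univ _
        · intro q hq q' hq' heq; exact hinj q hq q' hq' heq
      rw [Finset.card_product, Finset.offDiag_card, Finset.card_univ, Fintype.card_fin,
        Finset.card_univ, Fintype.card_perm, Fintype.card_fin] at hcard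
      have hD : (k+2) * (k+2) - (k+2) = (k+2) * (k+1) := by
        have : (k+2) * (k+2) = (k+2)*(k+1) + (k+2) := by ring
        omega
      rw [hD] at hcard
      have hfac : (k+2).factorial = k.factorial * ((k+2)*(k+1)) := by
        rw [Nat.factorial_succ, Nat.factorial_succ]; ring
      rw [hfac] at hcard
      exact Nat.le_of_mul_le_mul_right hcard (by positivity)
private lemma bad_cases {m : ℕ} (R : Finset (Fin m × Fin m)) (i1 i2 j1 j2 : Fin m)
    (hi : i1 ≠ i2) (hj : j1 ≠ j2) (σ : Equiv.Perm (Fin m))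
    (havd : ∀ t, (t, σ t) ∉ R) (k0 : Fin m)
    (hk : (k0, fm i1 i2 j1 j2 σ k0) ∈ (R.erase (i1, j1)).erase (i2, j2)) :
    ∃ p ∈ R, (σ p.1 = j1 ∧ σ i1 = p.2) ∨ (σ p.1 = j2 ∧ σ i2 = p.2) ∨
      (σ p.1 = j2 ∧ σ i1 = p.2) ∨ (σ p.1 = j1 ∧ σ i2 = p.2) := by
  set a := σ⁻¹ j1 with ha
  set σ1 := σ * Equiv.swap i1 a with hσ1
  set b := σ1⁻¹ j2 with hb
  set π := fm i1 i2 j1 j2 σ with hπdef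
  have hσa : σ a = j1 := by simp [ha]
  have hσ1i1 : σ1 i1 = j1 := by simp [hσ1, Equiv.Perm.mul_apply, ha]
  have hσ1b : σ1 b = j2 := by simp [hb]
  have hbi1 : b ≠ i1 := fun h => hj (by rw [← hσ1b, h, hσ1i1])
  have hπap : ∀ t, π t = σ1 (Equiv.swap i2 b t) := fun t => rfl
  have hπi1 : π i1 = j1 := fm_i1 i1 i2 j1 j2 hi hj σ
  have hπi2 : π i2 = j2 := fm_i2 i1 i2 j1 j2 σ
  rw [Finset.mem_erase, Finset.mem_erase] at hk
  obtain ⟨hne2, hne1, hmem⟩ := hk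
  have hki1 : k0 ≠ i1 := by
    intro h; subst h; exact hne1 (by rw [hπi1])
  have hki2 : k0 ≠ i2 := by
    intro h; subst h; exact hne2 (by rw [hπi2])
  have hneσ : π k0 ≠ σ k0 := by
    intro h; exact havd k0 (by rw [← h]; exact hmem)
  refine ⟨(k0, π k0), hmem, ?_⟩
  by_cases hkb : k0 = b
  · -- π k0 = σ1 i2
    have hπk : π k0 = σ (Equiv.swap i1 a i2) := by
      rw [hπap, hkb, Equiv.swap_apply_right]; rfl
    by_cases hba : b = a
    · have hσk : σ k0 = j1 := by rw [hkb, hba, hσa]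
      by_cases hi2a : i2 = a
      · exact absurd (hkb.trans (hba.trans hi2a.symm)) hki2
      · right; right; right
        refine ⟨hσk, ?_⟩
        rw [hπk, Equiv.swap_apply_of_ne_of_ne hi.symm hi2a]
    · have hσk : σ k0 = j2 := by
        rw [hkb]
        have : Equiv.swap i1 a b = b :=
          Equiv.swap_apply_of_ne_of_ne hbi1 hba
        rw [← this]
        exact hσ1b
      by_cases hi2a : i2 = a
      · right; right; left
        refine ⟨hσk, ?_⟩
        rw [hπk, hi2a, Equiv.swap_apply_right]
      · right; left
        refine ⟨hσk, ?_⟩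
        rw [hπk, Equiv.swap_apply_of_ne_of_ne hi.symm hi2a]
  · -- swap i2 b fixes k0
    have hπk : π k0 = σ (Equiv.swap i1 a k0) := by
      rw [hπap, Equiv.swap_apply_of_ne_of_ne hki2 hkb]; rfl
    by_cases hka : k0 = a
    · left
      refine ⟨by rw [hka, hσa], ?_⟩
      rw [hπk, hka, Equiv.swap_apply_right]
    · exfalso
      apply hneσ
      rw [hπk, Equiv.swap_apply_of_ne_of_ne hki1 hka]

private lemma bad_filter_card (k : ℕ) (R : Finset (Fin (k+2) × Fin (k+2)))
    (i1 i2 j1 j2 : Fin (k+2)) (p : Fin (k+2) × Fin (k+2)) (hp : p ∈ R) :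
    (Finset.univ.filter
        (fun σ : Equiv.Perm (Fin (k+2)) => (∀ t, (t, σ t) ∉ R) ∧
          ((σ p.1 = j1 ∧ σ i1 = p.2) ∨ (σ p.1 = j2 ∧ σ i2 = p.2) ∨
           (σ p.1 = j2 ∧ σ i1 = p.2) ∨ (σ p.1 = j1 ∧ σ i2 = p.2)))).card ≤
      4 * k.factorial := by
  have hmk : (p.1, p.2) = p := rfl
  have h1 := perm_pair_count k R p.1 i1 j1 p.2 (fun _ h2 => by rw [h2, hmk]; exact hp)
  have h2 := perm_pair_count k R p.1 i2 j2 p.2 (fun _ h2 => by rw [h2, hmk]; exact hp)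
  have h3 := perm_pair_count k R p.1 i1 j2 p.2 (fun _ h2 => by rw [h2, hmk]; exact hp)
  have h4 := perm_pair_count k R p.1 i2 j1 p.2 (fun _ h2 => by rw [h2, hmk]; exact hp)
  set F1 := Finset.univ.filter fun σ : Equiv.Perm (Fin (k+2)) =>
      (∀ t, (t, σ t) ∉ R) ∧ σ p.1 = j1 ∧ σ i1 = p.2 with hF1
  set F2 := Finset.univ.filter fun σ : Equiv.Perm (Fin (k+2)) =>
      (∀ t, (t, σ t) ∉ R) ∧ σ p.1 = j2 ∧ σ i2 = p.2 with hF2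
  set F3 := Finset.univ.filter fun σ : Equiv.Perm (Fin (k+2)) =>
      (∀ t, (t, σ t) ∉ R) ∧ σ p.1 = j2 ∧ σ i1 = p.2 with hF3
  set F4 := Finset.univ.filter fun σ : Equiv.Perm (Fin (k+2)) =>
      (∀ t, (t, σ t) ∉ R) ∧ σ p.1 = j1 ∧ σ i2 = p.2 with hF4
  have hsub4 : Finset.univ.filter
      (fun σ : Equiv.Perm (Fin (k+2)) => (∀ t, (t, σ t) ∉ R) ∧
        ((σ p.1 = j1 ∧ σ i1 = p.2) ∨ (σ p.1 = j2 ∧ σ i2 = p.2) ∨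
         (σ p.1 = j2 ∧ σ i1 = p.2) ∨ (σ p.1 = j1 ∧ σ i2 = p.2))) ⊆ (F1 ∪ F2) ∪ (F3 ∪ F4) := by
    intro σ hσ
    simp only [hF1, hF2, hF3, hF4, Finset.mem_filter, Finset.mem_univ, true_and,
      Finset.mem_union] at hσ ⊢
    obtain ⟨hav, h⟩ := hσ
    rcases h with h|h|h|h
    · exact Or.inl (Or.inl ⟨hav, h⟩)
    · exact Or.inl (Or.inr ⟨hav, h⟩)
    · exact Or.inr (Or.inl ⟨hav, h⟩)
    · exact Or.inr (Or.inr ⟨hav, h⟩)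
  have hc := Finset.card_le_card hsub4
  have hu1 := Finset.card_union_le F1 F2
  have hu2 := Finset.card_union_le F3 F4
  have hu3 := Finset.card_union_le (F1 ∪ F2) (F3 ∪ F4)
  omega

private lemma biUnion_bound (k : ℕ) (R : Finset (Fin (k+2) × Fin (k+2)))
    (i1 i2 j1 j2 : Fin (k+2)) :
    (R.biUnion (fun p => Finset.univ.filter
        (fun σ : Equiv.Perm (Fin (k+2)) => (∀ t, (t, σ t) ∉ R) ∧
          ((σ p.1 = j1 ∧ σ i1 = p.2) ∨ (σ p.1 = j2 ∧ σ i2 = p.2) ∨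
           (σ p.1 = j2 ∧ σ i1 = p.2) ∨ (σ p.1 = j1 ∧ σ i2 = p.2))))).card ≤
      R.card * (4 * k.factorial) := by
  classical
  calc (R.biUnion _).card
      ≤ ∑ p ∈ R, (Finset.univ.filter
        (fun σ : Equiv.Perm (Fin (k+2)) => (∀ t, (t, σ t) ∉ R) ∧
          ((σ p.1 = j1 ∧ σ i1 = p.2) ∨ (σ p.1 = j2 ∧ σ i2 = p.2) ∨
           (σ p.1 = j2 ∧ σ i1 = p.2) ∨ (σ p.1 = j1 ∧ σ i2 = p.2)))).card :=
        Finset.card_biUnion_le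
    _ ≤ ∑ _p ∈ R, 4 * k.factorial :=
        Finset.sum_le_sum (fun p hp => bad_filter_card k R i1 i2 j1 j2 p hp)
    _ = R.card * (4 * k.factorial) := by rw [Finset.sum_const, smul_eq_mul]

set_option maxHeartbeats 1000000 in
theorem stmt7 (n : ℕ) (C γ : ℝ) (hC : 0 < C) (hγ : 0 < γ)
    (R : Finset (Fin n × Fin n)) (hR : (R.card : ℝ) ≤ C * n)
    (havoid : γ ≤
      ((Finset.univ.filter fun π : Equiv.Perm (Fin n) => ∀ k, (k, π k) ∉ R).card : ℝ)
        / (n.factorial : ℝ))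
    (hn : 32 * C / γ + 3 ≤ (n : ℝ))
    (i1 j1 i2 j2 : Fin n) (hi : i1 ≠ i2) (hj : j1 ≠ j2) :
    γ / 4 ≤
      ((Finset.univ.filter fun π : Equiv.Perm (Fin n) =>
          π i1 = j1 ∧ π i2 = j2 ∧ ∀ k, (k, π k) ∉ (R.erase (i1, j1)).erase (i2, j2)).card : ℝ)
        / ((n - 2).factorial : ℝ) := by
  classical
  have hn3 : (3:ℝ) < (n:ℝ) := by
    have h0 : 0 < 32 * C / γ := by positivity
    linarith
  have hn4 : 4 ≤ n := by
    have : (3:ℕ) < n := by exact_mod_cast hn3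
    omega
  obtain ⟨k, rfl⟩ : ∃ k, n = k + 2 := ⟨n - 2, by omega⟩
  simp only [Nat.add_sub_cancel]
  set A := Finset.univ.filter (fun π : Equiv.Perm (Fin (k+2)) => ∀ t, (t, π t) ∉ R) with hAdef
  set T := Finset.univ.filter (fun π : Equiv.Perm (Fin (k+2)) =>
      π i1 = j1 ∧ π i2 = j2 ∧ ∀ t, (t, π t) ∉ (R.erase (i1, j1)).erase (i2, j2)) with hTdef
  have hfacpos : (0:ℝ) < ((k+2).factorial : ℝ) := by
    exact_mod_cast Nat.factorial_pos (k+2)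
  have hA : γ * ((k+2).factorial : ℝ) ≤ (A.card : ℝ) := (le_div_iff₀ hfacpos).mp havoid
  set G := A.filter (fun σ => ∀ t, (t, fm i1 i2 j1 j2 σ t) ∉ (R.erase (i1, j1)).erase (i2, j2))
    with hGdef
  set B := A.filter (fun σ => ¬ ∀ t, (t, fm i1 i2 j1 j2 σ t) ∉ (R.erase (i1, j1)).erase (i2, j2))
    with hBdef
  have hGB : G.card + B.card = A.card := Finset.card_filter_add_card_filter_not _
  -- G injects into T × Fin × Fin
  have hGT : G.card ≤ T.card * ((k+2) * (k+2)) := by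
    have hle := Finset.card_le_card_of_injOn
      (f := fun σ : Equiv.Perm (Fin (k+2)) =>
        (fm i1 i2 j1 j2 σ, (σ⁻¹ j1, (σ * Equiv.swap i1 (σ⁻¹ j1))⁻¹ j2)))
      (s := G) (t := T ×ˢ ((Finset.univ : Finset (Fin (k+2))) ×ˢ Finset.univ))
      (fun σ hσ => by
        rw [hGdef, Finset.mem_coe, Finset.mem_filter, hAdef, Finset.mem_filter] at hσ
        obtain ⟨⟨-, havd⟩, hgood⟩ := hσ
        simp only [Finset.mem_coe, Finset.mem_product, Finset.mem_univ, and_true, true_and]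
        rw [hTdef, Finset.mem_filter]
        exact ⟨Finset.mem_univ _, fm_i1 i1 i2 j1 j2 hi hj σ, fm_i2 i1 i2 j1 j2 σ, hgood⟩)
      (by
        intro σ _ σ' _ heq
        have e1 : fm i1 i2 j1 j2 σ = fm i1 i2 j1 j2 σ' := congrArg Prod.fst heq
        have e2 : σ⁻¹ j1 = σ'⁻¹ j1 := congrArg (fun q => q.2.1) heq
        have e3 : (σ * Equiv.swap i1 (σ⁻¹ j1))⁻¹ j2 = (σ' * Equiv.swap i1 (σ'⁻¹ j1))⁻¹ j2 :=
          congrArg (fun q => q.2.2) heq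
        calc σ = fm i1 i2 j1 j2 σ * Equiv.swap i2 ((σ * Equiv.swap i1 (σ⁻¹ j1))⁻¹ j2)
              * Equiv.swap i1 (σ⁻¹ j1) := fm_undo i1 i2 j1 j2 σ
          _ = fm i1 i2 j1 j2 σ' * Equiv.swap i2 ((σ' * Equiv.swap i1 (σ'⁻¹ j1))⁻¹ j2)
              * Equiv.swap i1 (σ'⁻¹ j1) := by rw [e1, e3, e2]
          _ = σ' := (fm_undo i1 i2 j1 j2 σ').symm)
    rw [Finset.card_product, Finset.card_product, Finset.card_univ, Fintype.card_fin] at hle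
    exact hle
  -- B is small
  have hBR : B.card ≤ R.card * (4 * k.factorial) := by
    have hsub : B ⊆ R.biUnion (fun p => Finset.univ.filter
        (fun σ : Equiv.Perm (Fin (k+2)) => (∀ t, (t, σ t) ∉ R) ∧
          ((σ p.1 = j1 ∧ σ i1 = p.2) ∨ (σ p.1 = j2 ∧ σ i2 = p.2) ∨
           (σ p.1 = j2 ∧ σ i1 = p.2) ∨ (σ p.1 = j1 ∧ σ i2 = p.2)))) := by
      intro σ hσ
      rw [hBdef, Finset.mem_filter, hAdef, Finset.mem_filter] at hσ
      obtain ⟨⟨-, havd⟩, hbad⟩ := hσ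
      push_neg at hbad
      obtain ⟨k0, hk0⟩ := hbad
      obtain ⟨p, hp, hdisj⟩ := bad_cases R i1 i2 j1 j2 hi hj σ havd k0 hk0
      rw [Finset.mem_biUnion]
      refine ⟨p, hp, ?_⟩
      simp only [Finset.mem_filter, Finset.mem_univ, true_and]
      exact ⟨havd, hdisj⟩
    exact (Finset.card_le_card hsub).trans (biUnion_bound k R i1 i2 j1 j2)
  -- arithmetic conclusion
  have hfac2 : ((k+2).factorial : ℝ) = ((k:ℝ)+2) * (((k:ℝ)+1) * (k.factorial : ℝ)) := by
    rw [Nat.factorial_succ, Nat.factorial_succ]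
    push_cast
    ring
  have hF : (0:ℝ) < (k.factorial : ℝ) := by exact_mod_cast Nat.factorial_pos k
  have h32 : 32*C + 3*γ ≤ γ * ((k:ℝ)+2) := by
    have h := mul_le_mul_of_nonneg_left hn hγ.le
    have hγc : γ * (32*C/γ) = 32*C := by field_simp
    rw [mul_add, hγc] at h
    push_cast at h
    linarith
  have c2 : (A.card : ℝ) = (G.card : ℝ) + (B.card : ℝ) := by exact_mod_cast hGB.symm
  have c3 : (G.card : ℝ) ≤ (T.card : ℝ) * (((k:ℝ)+2) * ((k:ℝ)+2)) := by
    have := hGT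
    have h' : (G.card : ℝ) ≤ ((T.card * ((k+2) * (k+2)) : ℕ) : ℝ) := by exact_mod_cast this
    push_cast at h'
    linarith
  have c4 : (B.card : ℝ) ≤ (R.card : ℝ) * (4 * (k.factorial : ℝ)) := by
    have h' : (B.card : ℝ) ≤ ((R.card * (4 * k.factorial) : ℕ) : ℝ) := by exact_mod_cast hBR
    push_cast at h'
    linarith
  have c5 : (R.card : ℝ) ≤ C * ((k:ℝ)+2) := by push_cast at hR; linarith
  have c6 : (B.card : ℝ) ≤ (C * ((k:ℝ)+2)) * (4 * (k.factorial : ℝ)) := by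
    refine c4.trans ?_
    apply mul_le_mul_of_nonneg_right c5
    positivity
  have hAr : γ * (((k:ℝ)+2) * (((k:ℝ)+1) * (k.factorial : ℝ))) ≤
      (T.card : ℝ) * (((k:ℝ)+2) * ((k:ℝ)+2)) + (C * ((k:ℝ)+2)) * (4 * (k.factorial : ℝ)) := by
    rw [hfac2] at hA
    linarith
  rw [le_div_iff₀ hF]
  have key : 16*C ≤ γ * (3*(k:ℝ)+2) := by nlinarith
  have key2 : γ * (((k:ℝ)+2)/4) ≤ γ*((k:ℝ)+1) - 4*C := by nlinarith
  have hk2 : (0:ℝ) < (k:ℝ)+2 := by positivity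
  have hTT : γ/4 * (k.factorial : ℝ) * (((k:ℝ)+2) * ((k:ℝ)+2)) ≤
      (T.card : ℝ) * (((k:ℝ)+2) * ((k:ℝ)+2)) := by
    nlinarith [hAr, mul_nonneg (mul_nonneg hk2.le hF.le) (sub_nonneg.mpr key2)]
  exact le_of_mul_le_mul_right hTT (by positivity)
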